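/- For any monotone submodular f : 2^N → ℝ≥0 with f(∅) = 0 and any nonempty set S ⊆ N, the comparison function f_0(S) = (1/|S|) · Σ_{e ∈ S} f(S \ {e}) satisfies (1 − 1/|S|)·f(S) ≤ f_0(S) ≤ f(S). -/

import Mathlib

lemma aux_marginals {α : Type*} [DecidableEq α]
    (f : Finset α → ℝ) (hf0 : ∀ S, 0 ≤ f S)
    (hsub : ∀ A B : Finset α, A ⊆ B → ∀ x,
      f (insert x B) - f B ≤ f (insert x A) - f A) :
    ∀ S : Finset α, ∑ e ∈ S, (f S - f (S.erase e)) ≤ f S := by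
  intro S
  induction S using Finset.induction_on with
  | empty => simpa using hf0 ∅
  | @insert a s ha ih =>
    rw [Finset.sum_insert ha]
    have he : (insert a s).erase a = s := Finset.erase_insert ha
    have key : ∀ e ∈ s, f (insert a s) - f ((insert a s).erase e)
        ≤ f s - f (s.erase e) := by
      intro e he'
      have hne : e ≠ a := fun h => ha (h ▸ he')
      have h1 : (insert a s).erase e = insert a (s.erase e) := by
        rw [Finset.erase_insert_of_ne hne.symm]
      have h2 : insert e (s.erase e) = s := Finset.insert_erase he'
      have h3 : insert e (insert a (s.erase e)) = insert a s := by
        rw [Finset.insert_comm, h2]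
      have := hsub (s.erase e) (insert a (s.erase e))
        (Finset.subset_insert _ _) e
      rw [h2, h3] at this
      rw [h1]; exact this
    calc f (insert a s) - f ((insert a s).erase a)
          + ∑ e ∈ s, (f (insert a s) - f ((insert a s).erase e))
        ≤ f (insert a s) - f s + ∑ e ∈ s, (f s - f (s.erase e)) := by
          rw [he]; exact add_le_add le_rfl (Finset.sum_le_sum key)
      _ ≤ f (insert a s) - f s + f s := add_le_add le_rfl ih
      _ = f (insert a s) := by ring

theorem stmt_3 {α : Type*} [DecidableEq α] (N : Finset α)
    (f : Finset α → ℝ) (hf0 : ∀ S, 0 ≤ f S) (hempty : f ∅ = 0)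
    (hmono : ∀ A B : Finset α, A ⊆ B → f A ≤ f B)
    (hsub : ∀ A B : Finset α, A ⊆ B → ∀ x,
      f (insert x B) - f B ≤ f (insert x A) - f A)
    (S : Finset α) (hS : S ⊆ N) (hne : S.Nonempty) :
    (1 - 1 / (S.card : ℝ)) * f S ≤ (1 / (S.card : ℝ)) * ∑ e ∈ S, f (S.erase e) ∧
      (1 / (S.card : ℝ)) * ∑ e ∈ S, f (S.erase e) ≤ f S := by
  have hc : (0 : ℝ) < S.card := by
    exact_mod_cast Finset.card_pos.mpr hne
  have key := aux_marginals f hf0 hsub S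
  rw [Finset.sum_sub_distrib, Finset.sum_const, nsmul_eq_mul] at key
  constructor
  · have h : (S.card : ℝ) * f S - f S ≤ ∑ e ∈ S, f (S.erase e) := by linarith
    rw [sub_mul, one_mul, div_mul_eq_mul_div, one_mul, div_mul_eq_mul_div, one_mul]
    have e1 : f S - f S / (S.card : ℝ) = ((S.card : ℝ) * f S - f S) / (S.card : ℝ) := by
      field_simp
    rw [e1, div_le_div_iff₀ hc hc]
    nlinarith
  · have h : ∑ e ∈ S, f (S.erase e) ≤ (S.card : ℝ) * f S := by
      calc ∑ e ∈ S, f (S.erase e) ≤ ∑ _e ∈ S, f S :=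
            Finset.sum_le_sum fun e _ => hmono _ _ (Finset.erase_subset _ _)
        _ = (S.card : ℝ) * f S := by rw [Finset.sum_const, nsmul_eq_mul]
    rw [div_mul_eq_mul_div, one_mul, div_le_iff₀ hc]
    linarith [mul_le_mul_of_nonneg_left h (le_of_lt (by positivity : (0:ℝ) < 1))]
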